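/- Let a, c ∈ ℂ and let t, z ∈ ℂ satisfy t ∉ (−∞,0] and t−z ∉ (−∞,0]. Define f(z,t) = t^{a−c} e^{t} (t−z)^{−a} using principal branches. Then z ∂_z² f(z,t) + (c−z) ∂_z f(z,t) − a f(z,t) = −a ∂_t [ t^{a−c+1} e^{t} (t−z)^{−a−1} ]. -/

import Mathlib

open Complex

lemma aux_hasDerivAt (t C b z0 : ℂ) (h : t - z0 ∈ Complex.slitPlane) :
    HasDerivAt (fun w => C * (t - w) ^ b) (-(C * b * (t - z0) ^ (b - 1))) z0 := by
  have h1 : HasDerivAt (fun w : ℂ => t - w) (-1) z0 := by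
    simpa using (hasDerivAt_id' z0).const_sub t
  have h2 : HasDerivAt (fun y => C * (t - y) ^ b) (C * (b * (t - z0) ^ (b - 1) * -1)) z0 :=
    (h1.cpow_const (c := b) h).const_mul C
  convert h2 using 1
  ring

theorem confluent_integrand_identity (a c : ℂ) (t z : ℂ)
    (ht : t ∈ Complex.slitPlane) (htz : (t - z) ∈ Complex.slitPlane) :
    z * deriv (deriv (fun w : ℂ =>
          t ^ (a - c) * Complex.exp t * (t - w) ^ (-a))) z
      + (c - z) * deriv (fun w : ℂ =>
          t ^ (a - c) * Complex.exp t * (t - w) ^ (-a)) z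
      - a * (t ^ (a - c) * Complex.exp t * (t - z) ^ (-a))
    = -a * deriv (fun s : ℂ =>
        s ^ (a - c + 1) * Complex.exp s * (s - z) ^ (-a - 1)) t := by
  set C : ℂ := t ^ (a - c) * Complex.exp t with hC
  have ht0 : t ≠ 0 := Complex.slitPlane_ne_zero ht
  have hz0 : t - z ≠ 0 := Complex.slitPlane_ne_zero htz
  -- first derivative in w, on the open set U
  have hU : IsOpen {w : ℂ | t - w ∈ Complex.slitPlane} :=
    Complex.isOpen_slitPlane.preimage (by fun_prop)
  have hderiv1 : ∀ w ∈ {w : ℂ | t - w ∈ Complex.slitPlane},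
      deriv (fun w : ℂ => C * (t - w) ^ (-a)) w
        = -(C * (-a) * (t - w) ^ (-a - 1)) := fun w hw =>
    (aux_hasDerivAt t C (-a) w hw).deriv
  have heq : deriv (fun w : ℂ => C * (t - w) ^ (-a))
      =ᶠ[nhds z] fun w => -(C * (-a) * (t - w) ^ (-a - 1)) := by
    filter_upwards [hU.mem_nhds htz] with w hw using hderiv1 w hw
  have hd2 : deriv (deriv (fun w : ℂ => C * (t - w) ^ (-a))) z
      = -((-(C * (-a))) * (-a - 1) * (t - z) ^ (-a - 1 - 1)) := by
    rw [heq.deriv_eq]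
    have := aux_hasDerivAt t (-(C * (-a))) (-a - 1) z htz
    have h2 : (fun w => -(C * (-a)) * (t - w) ^ (-a - 1))
        = fun w => -(C * (-a) * (t - w) ^ (-a - 1)) := by
      funext w; ring
    rw [← h2]
    exact this.deriv
  have hd1 : deriv (fun w : ℂ => C * (t - w) ^ (-a)) z
      = -(C * (-a) * (t - z) ^ (-a - 1)) := hderiv1 z htz
  -- derivative in s at t
  have hA : HasDerivAt (fun s : ℂ => s ^ (a - c + 1))
      ((a - c + 1) * t ^ (a - c + 1 - 1) * 1) t :=
    (hasDerivAt_id t).cpow_const ht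
  have hB : HasDerivAt Complex.exp (Complex.exp t) t := Complex.hasDerivAt_exp t
  have hD : HasDerivAt (fun s : ℂ => (s - z) ^ (-a - 1))
      ((-a - 1) * (t - z) ^ (-a - 1 - 1) * 1) t :=
    ((hasDerivAt_id t).sub_const z).cpow_const htz
  have hRHS := (hA.mul hB).mul hD
  rw [show (fun s : ℂ => s ^ (a - c + 1) * Complex.exp s * (s - z) ^ (-a - 1)) =
      ((fun s : ℂ => s ^ (a - c + 1)) * Complex.exp * fun s => (s - z) ^ (-a - 1)) from rfl,
    hRHS.deriv, hd2, hd1]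
  simp only [Pi.mul_apply]
  -- algebraic identity
  have q1 : (t - z) ^ (-a - 1) = (t - z) ^ (-a - 2) * (t - z) := by
    rw [show (-a - 1 : ℂ) = (-a - 2) + 1 by ring, Complex.cpow_add _ _ hz0,
      Complex.cpow_one]
  have q0 : (t - z) ^ (-a) = (t - z) ^ (-a - 2) * (t - z) * (t - z) := by
    rw [show (-a : ℂ) = (-a - 1) + 1 by ring, Complex.cpow_add _ _ hz0,
      Complex.cpow_one, q1]
    congr 3
    ring
  have q2 : (t - z) ^ (-a - 1 - 1) = (t - z) ^ (-a - 2) := by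
    congr 1; ring
  have p1 : t ^ (a - c + 1) = t ^ (a - c) * t := by
    rw [Complex.cpow_add _ _ ht0, Complex.cpow_one]
  have p0 : t ^ (a - c + 1 - 1) = t ^ (a - c) := by
    congr 1; ring
  rw [q2, q1, q0, p1, p0, hC]
  ring
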